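/- Let V₁, V₂ be finite-dimensional vector spaces and v ∈ V₁ ⊗ V₂ with v ≠ 0. If v ∈ U ⊗ W for subspaces U ≤ V₁ and W ≤ V₂ with dim U = dim W = rank(v), then U = U₁^min(v) and W = U₂^min(v). -/

import Mathlib

open TensorProduct

set_option linter.unusedVariables false

section aux

variable {k V₁ V₂ : Type*} [Field k]
    [AddCommGroup V₁] [Module k V₁] [AddCommGroup V₂] [Module k V₂]

lemma aux_repr {W : Type*} [AddCommGroup W] [Module k W] {ι : Type*} [Fintype ι]
    (b : Module.Basis ι k W) (t : V₁ ⊗[k] W) :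
    ∃ x : ι → V₁, t = ∑ i, x i ⊗ₜ[k] b i := by
  induction t with
  | zero => exact ⟨0, by simp⟩
  | tmul m w =>
      refine ⟨fun i => b.repr w i • m, ?_⟩
      calc m ⊗ₜ[k] w = m ⊗ₜ[k] (∑ i, b.repr w i • b i) := by rw [b.sum_repr w]
        _ = ∑ i, (b.repr w i • m) ⊗ₜ[k] b i := by
            rw [tmul_sum]; exact Finset.sum_congr rfl fun i _ => by
              rw [tmul_smul, smul_tmul']
  | add s t hs ht =>
      obtain ⟨x, hx⟩ := hs; obtain ⟨y, hy⟩ := ht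
      exact ⟨x + y, by simp [hx, hy, add_tmul, Finset.sum_add_distrib]⟩

lemma aux_min_le [FiniteDimensional k V₁] [FiniteDimensional k V₂]
    (v : V₁ ⊗[k] V₂) (W' : Submodule k V₂)
    (h : v ∈ LinearMap.range (TensorProduct.map (LinearMap.id : V₁ →ₗ[k] V₁) W'.subtype)) :
    Module.finrank k
      ↥(sInf {U' : Submodule k V₁ |
        v ∈ LinearMap.range (TensorProduct.map U'.subtype (LinearMap.id : V₂ →ₗ[k] V₂))})
      ≤ Module.finrank k W' := by
  obtain ⟨t, rfl⟩ := h
  let b := Module.finBasis k W'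
  obtain ⟨x, rfl⟩ := aux_repr b t
  set U' : Submodule k V₁ := Submodule.span k (Set.range x) with hU'
  have hin : U' ∈ {U' : Submodule k V₁ |
      TensorProduct.map (LinearMap.id : V₁ →ₗ[k] V₁) W'.subtype (∑ i, x i ⊗ₜ[k] b i)
        ∈ LinearMap.range (TensorProduct.map U'.subtype (LinearMap.id : V₂ →ₗ[k] V₂))} := by
    simp only [Set.mem_setOf_eq, map_sum, TensorProduct.map_tmul, LinearMap.id_coe, id_eq]
    rw [TensorProduct.range_map_eq_span_tmul]
    refine Submodule.sum_mem _ fun i _ => Submodule.subset_span ?_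
    exact ⟨⟨x i, Submodule.subset_span (Set.mem_range_self i)⟩, (b i : V₂), rfl⟩
  refine le_trans (Submodule.finrank_mono (sInf_le hin)) ?_
  have h2 : Module.finrank k U' ≤ Fintype.card (Fin (Module.finrank k W')) := by
    rw [hU']; exact finrank_range_le_card x
  simpa using h2

end aux

section aux2

variable {k V₁ V₂ : Type*} [Field k]
    [AddCommGroup V₁] [Module k V₁] [AddCommGroup V₂] [Module k V₂]

lemma aux_mem_iff (W' : Submodule k V₂) (v : V₁ ⊗[k] V₂) :
    v ∈ LinearMap.range (TensorProduct.map (LinearMap.id : V₁ →ₗ[k] V₁) W'.subtype) ↔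
      v ∈ LinearMap.range (W'.subtype.lTensor V₁) := Iff.rfl

lemma aux_inter (v : V₁ ⊗[k] V₂) (A B : Submodule k V₂)
    (hA : v ∈ LinearMap.range (A.subtype.lTensor V₁))
    (hB : v ∈ LinearMap.range (B.subtype.lTensor V₁)) :
    v ∈ LinearMap.range ((A ⊓ B).subtype.lTensor V₁) := by
  obtain ⟨t, rfl⟩ := hA
  set g : A →ₗ[k] V₂ ⧸ B := B.mkQ ∘ₗ A.subtype with hg
  have hgt : g.lTensor V₁ t = 0 := by
    have hexact : Function.Exact (B.subtype.lTensor V₁) (B.mkQ.lTensor V₁) :=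
      Module.Flat.lTensor_exact V₁ (LinearMap.exact_subtype_mkQ B)
    have h0 : B.mkQ.lTensor V₁ (A.subtype.lTensor V₁ t) = 0 :=
      (hexact _).mpr hB
    rw [hg, LinearMap.lTensor_comp]
    exact h0
  have hexact2 : Function.Exact ((LinearMap.ker g).subtype.lTensor V₁) (g.lTensor V₁) :=
    Module.Flat.lTensor_exact V₁ (LinearMap.exact_subtype_ker_map g)
  obtain ⟨s, hs⟩ := (hexact2 t).mp hgt
  have hsub : ∀ x : LinearMap.ker g, (x : A).1 ∈ A ⊓ B := by
    rintro ⟨⟨x, hxA⟩, hxg⟩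
    refine ⟨hxA, ?_⟩
    have : B.mkQ x = 0 := hxg
    exact (Submodule.Quotient.mk_eq_zero B).mp this
  set j : LinearMap.ker g →ₗ[k] (A ⊓ B : Submodule k V₂) :=
    LinearMap.codRestrict (A ⊓ B) (A.subtype ∘ₗ (LinearMap.ker g).subtype) hsub with hj
  have hcomp : A.subtype ∘ₗ (LinearMap.ker g).subtype = (A ⊓ B).subtype ∘ₗ j := by
    ext x; rfl
  refine ⟨j.lTensor V₁ s, ?_⟩
  rw [← LinearMap.comp_apply, ← LinearMap.lTensor_comp, ← hcomp, LinearMap.lTensor_comp,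
    LinearMap.comp_apply, hs]

lemma aux_sInf_mem [FiniteDimensional k V₂] (v : V₁ ⊗[k] V₂) :
    v ∈ LinearMap.range
      ((sInf {W' : Submodule k V₂ | v ∈ LinearMap.range (W'.subtype.lTensor V₁)}).subtype.lTensor
        V₁) := by
  set S : Set (Submodule k V₂) := {W' | v ∈ LinearMap.range (W'.subtype.lTensor V₁)} with hS
  have htop : (⊤ : Submodule k V₂) ∈ S := by
    have hsurj : Function.Surjective ((⊤ : Submodule k V₂).subtype.lTensor V₁) := by
      apply LinearMap.lTensor_surjective
      exact fun x => ⟨⟨x, trivial⟩, rfl⟩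
    exact hsurj v
  have hne : {n : ℕ | ∃ W' ∈ S, Module.finrank k W' = n}.Nonempty :=
    ⟨_, ⊤, htop, rfl⟩
  obtain ⟨M, hM, hMrank⟩ := Nat.sInf_mem hne
  have hmin : ∀ W' ∈ S, Module.finrank k M ≤ Module.finrank k W' := fun W' hW' => by
    rw [hMrank]; exact Nat.sInf_le ⟨W', hW', rfl⟩
  have hle : ∀ W' ∈ S, M ≤ W' := by
    intro W' hW'
    have hinter : M ⊓ W' ∈ S := aux_inter v M W' hM hW'
    have h1 : Module.finrank k M ≤ Module.finrank k ↥(M ⊓ W') := hmin _ hinter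
    have h2 : M ⊓ W' = M := Submodule.eq_of_le_of_finrank_le inf_le_left h1
    rw [← h2]; exact inf_le_right
  have : sInf S = M := le_antisymm (sInf_le hM) (le_sInf hle)
  rw [hS] at this ⊢
  rw [this]; exact hM

end aux2

/-- For `0 ≠ v ∈ V₁ ⊗ V₂`: if `v ∈ U ⊗ W` for subspaces `U ≤ V₁`, `W ≤ V₂` with
`dim U = dim W = rank v` (the rank of `v` being the common dimension of its minimal
subspaces), then `U = U₁^min(v)` and `W = U₂^min(v)`. -/
theorem stmt10 (k V₁ V₂ : Type*) [Field k]
    [AddCommGroup V₁] [Module k V₁] [AddCommGroup V₂] [Module k V₂]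
    [FiniteDimensional k V₁] [FiniteDimensional k V₂]
    (v : V₁ ⊗[k] V₂) (hv : v ≠ 0) (U : Submodule k V₁) (W : Submodule k V₂)
    (hmem : v ∈ LinearMap.range (TensorProduct.map U.subtype W.subtype))
    (hU : Module.finrank k U = Module.finrank k
      ↥(sInf {U' : Submodule k V₁ |
        v ∈ LinearMap.range (TensorProduct.map U'.subtype (LinearMap.id : V₂ →ₗ[k] V₂))}))
    (hW : Module.finrank k W = Module.finrank k
      ↥(sInf {U' : Submodule k V₁ |
        v ∈ LinearMap.range (TensorProduct.map U'.subtype (LinearMap.id : V₂ →ₗ[k] V₂))})) :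
    U = sInf {U' : Submodule k V₁ |
        v ∈ LinearMap.range (TensorProduct.map U'.subtype (LinearMap.id : V₂ →ₗ[k] V₂))} ∧
    W = sInf {W' : Submodule k V₂ |
        v ∈ LinearMap.range (TensorProduct.map (LinearMap.id : V₁ →ₗ[k] V₁) W'.subtype)} := by
  obtain ⟨t, ht⟩ := hmem
  have hfac1 : TensorProduct.map U.subtype (LinearMap.id : V₂ →ₗ[k] V₂) ∘ₗ
      TensorProduct.map (LinearMap.id : ↥U →ₗ[k] ↥U) W.subtype =
      TensorProduct.map U.subtype W.subtype := by
    rw [← TensorProduct.map_comp]; simp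
  have hfac2 : TensorProduct.map (LinearMap.id : V₁ →ₗ[k] V₁) W.subtype ∘ₗ
      TensorProduct.map U.subtype (LinearMap.id : ↥W →ₗ[k] ↥W) =
      TensorProduct.map U.subtype W.subtype := by
    rw [← TensorProduct.map_comp]; simp
  have hU1 : U ∈ {U' : Submodule k V₁ |
      v ∈ LinearMap.range (TensorProduct.map U'.subtype (LinearMap.id : V₂ →ₗ[k] V₂))} :=
    ⟨TensorProduct.map LinearMap.id W.subtype t, by
      rw [← LinearMap.comp_apply, hfac1, ht]⟩
  have hW2 : W ∈ {W' : Submodule k V₂ |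
      v ∈ LinearMap.range (TensorProduct.map (LinearMap.id : V₁ →ₗ[k] V₁) W'.subtype)} :=
    ⟨TensorProduct.map U.subtype LinearMap.id t, by
      rw [← LinearMap.comp_apply, hfac2, ht]⟩
  constructor
  · exact (Submodule.eq_of_le_of_finrank_le (sInf_le hU1) hU.le).symm
  · have hsmem : v ∈ LinearMap.range (TensorProduct.map (LinearMap.id : V₁ →ₗ[k] V₁)
        (sInf {W' : Submodule k V₂ |
          v ∈ LinearMap.range (TensorProduct.map (LinearMap.id : V₁ →ₗ[k] V₁)
            W'.subtype)}).subtype) :=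
      aux_sInf_mem v
    have hle := aux_min_le v _ hsmem
    exact (Submodule.eq_of_le_of_finrank_le (sInf_le hW2) (hW.le.trans hle)).symm
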